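/- Let β be an algebraic integer of degree n ≥ 5 over ℚ with conjugates β_1, …, β_n, and suppose Gal(ℚ(β_1,…,β_n)/ℚ) = 𝔄_n. Let a_1, …, a_n ∈ ℤ and set α = a_1β_1 + ⋯ + a_nβ_n. Then α generates ℚ(β_1,…,β_n) over ℚ (i.e., ℚ(α) = ℚ(β_1,…,β_n)) if and only if there are at most two distinct indices i, j with a_i = a_j (equivalently, the values a_1,…,a_n take at least n−1 distinct values). -/

import Mathlib

set_option maxHeartbeats 2000000
set_option synthInstance.maxHeartbeats 400000
set_option linter.unusedVariables false
set_option linter.unnecessarySimpa false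


open Polynomial

/-- The image of the permutation representation of the Galois group of the splitting
field on the roots `B 0, …, B (n-1)`. -/
def galoisImage (n : ℕ) (B : Fin n → ℂ) : Set (Equiv.Perm (Fin n)) :=
  {τ | ∃ σ : ℂ ≃ₐ[ℚ] ℂ, ∀ i, σ (B i) = B (τ i)}

section Helpers


open Polynomial

/-- Any automorphism of a subfield of `ℂ` extends to a ring automorphism of `ℂ`. -/
theorem extend_to_complex_aux (F : Type) [Field F] [Algebra F ℂ] (σ : F ≃+* F) :
    ∃ T : ℂ ≃+* ℂ, ∀ x : F, T (algebraMap F ℂ x) = algebraMap F ℂ (σ x) := by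
  obtain ⟨s, hs⟩ := exists_isTranscendenceBasis F ℂ
  letI : IsAlgClosure (Algebra.adjoin F (Set.range ((↑) : s → ℂ))) ℂ :=
    IsAlgClosed.isAlgClosure_of_transcendence_basis _ hs
  set E := Algebra.adjoin F (Set.range ((↑) : s → ℂ)) with hE
  let e : E ≃+* E :=
    (hs.1.aevalEquiv.symm.toRingEquiv.trans
      (MvPolynomial.mapEquiv s σ)).trans hs.1.aevalEquiv.toRingEquiv
  have he : ∀ x : F, e (algebraMap F E x) = algebraMap F E (σ x) := by
    intro x
    show hs.1.aevalEquiv (MvPolynomial.mapEquiv s σ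
      (hs.1.aevalEquiv.symm (algebraMap F E x))) = _
    have h1 : algebraMap F E x = hs.1.aevalEquiv (MvPolynomial.C x) := by
      rw [← MvPolynomial.algebraMap_eq]; exact (hs.1.aevalEquiv.commutes x).symm
    rw [h1, AlgEquiv.symm_apply_apply]
    simp only [MvPolynomial.mapEquiv_apply, MvPolynomial.map_C]
    rw [← MvPolynomial.algebraMap_eq, hs.1.aevalEquiv.commutes]; rfl
  refine ⟨IsAlgClosure.equivOfEquiv ℂ ℂ e, fun x => ?_⟩
  have h2 : algebraMap F ℂ x = algebraMap E ℂ (algebraMap F E x) := by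
    rw [← IsScalarTower.algebraMap_apply]
  rw [h2, IsAlgClosure.equivOfEquiv_algebraMap, he, ← IsScalarTower.algebraMap_apply]

/-- Any `ℚ`-automorphism of an intermediate field of `ℂ` extends to `ℂ`. -/
theorem extend_to_complex (K : IntermediateField ℚ ℂ) (σ : K ≃ₐ[ℚ] K) :
    ∃ T : ℂ ≃ₐ[ℚ] ℂ, ∀ x : K, T x = (σ x : ℂ) := by
  obtain ⟨T0, hT0⟩ := extend_to_complex_aux K σ.toRingEquiv
  have hQ : ∀ q : ℚ, T0 (algebraMap ℚ ℂ q) = algebraMap ℚ ℂ q := by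
    intro q
    have := map_ratCast (T0 : ℂ →+* ℂ) q
    simpa [eq_ratCast] using this
  refine ⟨AlgEquiv.ofRingEquiv hQ, fun x => ?_⟩
  have := hT0 x
  simpa using this


/-- `A_n` is 3-transitive for `n ≥ 5`. -/
theorem alt_three_trans {n : ℕ} (hn : 5 ≤ n) {i j k p q r : Fin n}
    (hij : i ≠ j) (hik : i ≠ k) (hjk : j ≠ k)
    (hpq : p ≠ q) (hpr : p ≠ r) (hqr : q ≠ r) :
    ∃ π : Equiv.Perm (Fin n), π ∈ alternatingGroup (Fin n) ∧
      π i = p ∧ π j = q ∧ π k = r := by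
  -- first build some permutation sending i↦p, j↦q, k↦r
  set s₁ := Equiv.swap i p with hs₁
  set j' := s₁ j with hj'
  set s₂ := Equiv.swap j' q with hs₂
  set k'' := s₂ (s₁ k) with hk''
  set s₃ := Equiv.swap k'' r with hs₃
  have hj'p : j' ≠ p := fun h =>
    hij (s₁.injective ((Equiv.swap_apply_left i p).trans h.symm))
  have hs₂p : s₂ p = p := Equiv.swap_apply_of_ne_of_ne (Ne.symm hj'p) hpq
  have hki : k ≠ i := Ne.symm hik
  have hk''p : k'' ≠ p := fun h =>
    hki (s₁.injective ((s₂.injective (h.trans hs₂p.symm)).trans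
      (Equiv.swap_apply_left i p).symm))
  have hk''q : k'' ≠ q := fun h =>
    hjk (s₁.injective (s₂.injective (h.trans (Equiv.swap_apply_left j' q).symm))).symm
  have hπ₀i : (s₃ * s₂ * s₁) i = p := by
    simp only [Equiv.Perm.mul_apply, hs₁, Equiv.swap_apply_left]
    rw [hs₂p]
    exact Equiv.swap_apply_of_ne_of_ne (Ne.symm hk''p) hpr
  have hπ₀j : (s₃ * s₂ * s₁) j = q := by
    simp only [Equiv.Perm.mul_apply]
    rw [← hj', hs₂, Equiv.swap_apply_left]
    exact Equiv.swap_apply_of_ne_of_ne (Ne.symm hk''q) hqr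
  have hπ₀k : (s₃ * s₂ * s₁) k = r := by
    simp only [Equiv.Perm.mul_apply]
    rw [← hk'', hs₃, Equiv.swap_apply_left]
  set π₀ := s₃ * s₂ * s₁ with hπ₀
  -- find two auxiliary points outside {i, j, k}
  have hcard : 1 < (({i, j, k} : Finset (Fin n))ᶜ).card := by
    have h3 : ({i, j, k} : Finset (Fin n)).card = 3 := by
      rw [Finset.card_insert_of_notMem (by simp [hij, hik]),
        Finset.card_insert_of_notMem (by simp [hjk]), Finset.card_singleton]
    rw [Finset.card_compl, h3, Fintype.card_fin]
    omega
  obtain ⟨u, hu, v, hv, huv⟩ := Finset.one_lt_card.mp hcard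
  simp only [Finset.mem_compl, Finset.mem_insert, Finset.mem_singleton, not_or] at hu hv
  by_cases hsgn : Equiv.Perm.sign π₀ = 1
  · exact ⟨π₀, Equiv.Perm.mem_alternatingGroup.mpr hsgn, hπ₀i, hπ₀j, hπ₀k⟩
  · refine ⟨π₀ * Equiv.swap u v, ?_, ?_, ?_, ?_⟩
    · rw [Equiv.Perm.mem_alternatingGroup, map_mul, Equiv.Perm.sign_swap huv]
      rcases Int.units_eq_one_or (Equiv.Perm.sign π₀) with h | h
      · exact absurd h hsgn
      · rw [h]; decide
    · rw [Equiv.Perm.mul_apply, Equiv.swap_apply_of_ne_of_ne (Ne.symm hu.1) (Ne.symm hv.1), hπ₀i]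
    · rw [Equiv.Perm.mul_apply,
        Equiv.swap_apply_of_ne_of_ne (Ne.symm hu.2.1) (Ne.symm hv.2.1), hπ₀j]
    · rw [Equiv.Perm.mul_apply,
        Equiv.swap_apply_of_ne_of_ne (Ne.symm hu.2.2) (Ne.symm hv.2.2), hπ₀k]

theorem remove_two {n : ℕ} (a : Fin n → ℤ) (u v : Fin n) (huv : u ≠ v)
    (h : ∀ m : Fin n, ∃ m', m' ≠ u ∧ m' ≠ v ∧ a m' = a m) :
    (Finset.univ.image a).card ≤ n - 2 := by
  have hsub : Finset.univ.image a ⊆ ((Finset.univ.erase u).erase v).image a := by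
    intro x hx
    obtain ⟨m, -, rfl⟩ := Finset.mem_image.mp hx
    obtain ⟨m', hmu, hmv, hm⟩ := h m
    exact Finset.mem_image.mpr ⟨m', by simp [Finset.mem_erase, hmu, hmv], hm⟩
  have h1 := Finset.card_le_card hsub
  have h2 := Finset.card_image_le (s := (Finset.univ.erase u).erase v) (f := a)
  have h3 : ((Finset.univ.erase u).erase v).card = n - 1 - 1 := by
    rw [Finset.card_erase_of_mem (Finset.mem_erase.mpr ⟨Ne.symm huv, Finset.mem_univ v⟩),
      Finset.card_erase_of_mem (Finset.mem_univ u), Finset.card_univ, Fintype.card_fin]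
  omega

theorem card_ge_of_unique_pair {n : ℕ} (a : Fin n → ℤ)
    (hQ : ∀ i j k l : Fin n, i ≠ j → k ≠ l → a i = a j → a k = a l →
      (k = i ∧ l = j) ∨ (k = j ∧ l = i)) :
    n - 1 ≤ (Finset.univ.image a).card := by
  by_cases hinj : Function.Injective a
  · rw [Finset.card_image_of_injective _ hinj, Finset.card_univ, Fintype.card_fin]; omega
  · obtain ⟨i₀, j₀, hne, heq⟩ : ∃ i j, i ≠ j ∧ a i = a j := by
      simp only [Function.Injective] at hinj
      push_neg at hinj
      obtain ⟨x, y, h1, h2⟩ := hinj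
      exact ⟨x, y, h2, h1⟩
    have hinj' : Set.InjOn a (Finset.univ.erase j₀) := by
      intro x hx y hy hxy
      by_contra hne'
      simp only [Finset.coe_erase, Set.mem_diff, Set.mem_singleton_iff] at hx hy
      rcases hQ i₀ j₀ x y hne hne' heq hxy with ⟨-, h⟩ | ⟨h, -⟩
      · exact hy.2 (by simpa using h)
      · exact hx.2 (by simpa using h)
    calc n - 1 = (Finset.univ.erase j₀).card := by
          rw [Finset.card_erase_of_mem (Finset.mem_univ _), Finset.card_univ, Fintype.card_fin]
      _ = ((Finset.univ.erase j₀).image a).card := (Finset.card_image_of_injOn hinj').symm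
      _ ≤ _ := Finset.card_le_card (Finset.image_subset_image (Finset.erase_subset _ _))

theorem rigid {n : ℕ} (hn : 5 ≤ n) (a : Fin n → ℤ)
    (hcard : n - 1 ≤ (Finset.univ.image a).card) (τ : Equiv.Perm (Fin n))
    (hτ : τ ∈ alternatingGroup (Fin n)) (hfix : ∀ i, a (τ i) = a i) : τ = 1 := by
  by_contra hne
  obtain ⟨i, hi⟩ : ∃ i, τ i ≠ i := by
    by_contra h
    push_neg at h
    exact hne (Equiv.ext h)
  set j := τ i with hj
  have hij : i ≠ j := fun h => hi h.symm
  by_cases hk : ∃ k, k ≠ i ∧ k ≠ j ∧ τ k ≠ k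
  · obtain ⟨k, hki, hkj, hkk⟩ := hk
    set l := τ k with hl
    have hcard2 : (Finset.univ.image a).card ≤ n - 2 := by
      apply remove_two a j k (Ne.symm hkj)
      intro m
      by_cases hmj : m = j
      · exact ⟨i, hij, Ne.symm hki, by rw [hmj, hj]; exact (hfix i).symm⟩
      · by_cases hmk : m = k
        · by_cases hlj : l = j
          · refine ⟨i, hij, Ne.symm hki, ?_⟩
            rw [hmk]
            calc a i = a j := (hfix i).symm
              _ = a l := by rw [hlj]
              _ = a k := by rw [hl]; exact hfix k
          · exact ⟨l, hlj, hkk, by rw [hmk, hl]; exact hfix k⟩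
        · exact ⟨m, hmj, hmk, rfl⟩
    omega
  · push_neg at hk
    have hτj : τ j = i := by
      have hmj : τ j ≠ j := fun h => hij (τ.injective (show τ i = τ j by rw [← hj, h]))
      by_cases hmi : τ j = i
      · exact hmi
      · have h1 := hk (τ j) hmi hmj
        exact absurd (τ.injective h1.symm).symm hmj
    have hswap : τ = Equiv.swap i j := by
      refine Equiv.ext fun x => ?_
      by_cases hxi : x = i
      · rw [hxi, Equiv.swap_apply_left, ← hj]
      · by_cases hxj : x = j
        · rw [hxj, Equiv.swap_apply_right]; exact hτj
        · rw [hk x hxi hxj, Equiv.swap_apply_of_ne_of_ne hxi hxj]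
    rw [hswap, Equiv.Perm.mem_alternatingGroup, Equiv.Perm.sign_swap hij] at hτ
    exact absurd hτ (by decide)

theorem key_rel {n : ℕ} (hn : 5 ≤ n) {B : Fin n → ℂ} (hBinj : Function.Injective B)
    (hA : ∀ ρ : Equiv.Perm (Fin n), ρ ∈ alternatingGroup (Fin n) →
      ∃ σ : ℂ ≃ₐ[ℚ] ℂ, ∀ i, σ (B i) = B (ρ i))
    (c : Fin n → ℤ) (hsum : ∑ i, c i = 0)
    (hrel : ∑ i, (c i : ℂ) * B i = 0) : ∀ i, c i = 0 := by
  have step1 : ∀ ρ : Equiv.Perm (Fin n), ρ ∈ alternatingGroup (Fin n) →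
      ∑ i, (c (ρ i) : ℂ) * B i = 0 := by
    intro ρ hρ
    obtain ⟨σ, hσ⟩ := hA ρ⁻¹ (inv_mem hρ)
    have h0 : ∑ i, (c i : ℂ) * B (ρ⁻¹ i) = 0 := by
      have h1 := congrArg σ hrel
      rw [map_sum, map_zero] at h1
      simpa only [map_mul, map_intCast, hσ] using h1
    calc ∑ i, (c (ρ i) : ℂ) * B i
        = ∑ i, (c (ρ i) : ℂ) * B (ρ⁻¹ (ρ i)) := by simp
      _ = ∑ i, (c i : ℂ) * B (ρ⁻¹ i) := Equiv.sum_comp ρ (fun i => (c i : ℂ) * B (ρ⁻¹ i))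
      _ = 0 := h0
  have step2 : ∀ i j k p q r : Fin n, i ≠ j → i ≠ k → j ≠ k → p ≠ q → p ≠ r → q ≠ r →
      ((c p : ℂ) - c q) * B i + ((c q : ℂ) - c r) * B j + ((c r : ℂ) - c p) * B k = 0 := by
    intro i j k p q r hij hik hjk hpq hpr hqr
    obtain ⟨π, hπA, hπi, hπj, hπk⟩ := alt_three_trans hn hij hik hjk hpq hpr hqr
    set γ := Equiv.swap i j * Equiv.swap j k with hγ
    have hγA : γ ∈ alternatingGroup (Fin n) := by
      rw [Equiv.Perm.mem_alternatingGroup, hγ, map_mul,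
        Equiv.Perm.sign_swap hij, Equiv.Perm.sign_swap hjk]
      decide
    have hγi : γ i = j := by
      rw [hγ, Equiv.Perm.mul_apply, Equiv.swap_apply_of_ne_of_ne hij hik,
        Equiv.swap_apply_left]
    have hγj : γ j = k := by
      rw [hγ, Equiv.Perm.mul_apply, Equiv.swap_apply_left,
        Equiv.swap_apply_of_ne_of_ne (Ne.symm hik) (Ne.symm hjk)]
    have hγk : γ k = i := by
      rw [hγ, Equiv.Perm.mul_apply, Equiv.swap_apply_right, Equiv.swap_apply_right]
    have h1 := step1 π hπA
    have h2 := step1 (π * γ) (mul_mem hπA hγA)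
    simp only [Equiv.Perm.mul_apply] at h2
    have hsub : ∑ m, ((c (π m) : ℂ) - c (π (γ m))) * B m = 0 := by
      have : ∀ m, ((c (π m) : ℂ) - c (π (γ m))) * B m
          = (c (π m) : ℂ) * B m - (c (π (γ m)) : ℂ) * B m := fun m => by ring
      rw [Finset.sum_congr rfl (fun m _ => this m), Finset.sum_sub_distrib, h1, h2, sub_zero]
    have hzero : ∀ m ∈ Finset.univ, m ∉ ({i, j, k} : Finset (Fin n)) →
        ((c (π m) : ℂ) - c (π (γ m))) * B m = 0 := by
      intro m _ hm
      simp only [Finset.mem_insert, Finset.mem_singleton, not_or] at hm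
      have hγm : γ m = m := by
        rw [hγ, Equiv.Perm.mul_apply, Equiv.swap_apply_of_ne_of_ne hm.2.1 hm.2.2,
          Equiv.swap_apply_of_ne_of_ne hm.1 hm.2.1]
      rw [hγm, sub_self, zero_mul]
    have hset : ∑ m ∈ ({i, j, k} : Finset (Fin n)), ((c (π m) : ℂ) - c (π (γ m))) * B m = 0 := by
      rw [Finset.sum_subset (Finset.subset_univ _) hzero]
      exact hsub
    rw [Finset.sum_insert (by simp [hij, hik]), Finset.sum_insert (by simp [hjk]),
      Finset.sum_singleton, hγi, hγj, hγk, hπi, hπj, hπk] at hset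
    linear_combination hset
  have step3 : ∀ p q r : Fin n, p ≠ q → p ≠ r → q ≠ r → c p + c q = 2 * c r := by
    intro p q r hpq hpr hqr
    have h01 : (⟨0, by omega⟩ : Fin n) ≠ ⟨1, by omega⟩ := by simp [Fin.ext_iff]
    have h02 : (⟨0, by omega⟩ : Fin n) ≠ ⟨2, by omega⟩ := by simp [Fin.ext_iff]
    have h12 : (⟨1, by omega⟩ : Fin n) ≠ ⟨2, by omega⟩ := by simp [Fin.ext_iff]
    have E1 := step2 ⟨0, by omega⟩ ⟨1, by omega⟩ ⟨2, by omega⟩ p q r h01 h02 h12 hpq hpr hqr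
    have E2 := step2 ⟨0, by omega⟩ ⟨2, by omega⟩ ⟨1, by omega⟩ p q r h02 h01 (Ne.symm h12)
      hpq hpr hqr
    have hBne : B ⟨1, by omega⟩ - B ⟨2, by omega⟩ ≠ 0 :=
      sub_ne_zero_of_ne (fun h => h12 (hBinj h))
    have hmul : ((c p : ℂ) + c q - 2 * c r) * (B ⟨1, by omega⟩ - B ⟨2, by omega⟩) = 0 := by
      linear_combination E1 - E2
    rcases mul_eq_zero.mp hmul with h | h
    · have h' : (c p : ℂ) + c q = 2 * c r := by linear_combination h
      exact_mod_cast h'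
    · exact absurd h hBne
  have step4 : ∀ p q : Fin n, c p = c q := by
    intro p q
    by_cases hpq : p = q
    · rw [hpq]
    · obtain ⟨r, hrp, hrq⟩ : ∃ r : Fin n, r ≠ p ∧ r ≠ q := by
        by_contra h
        push_neg at h
        have hsubs : (Finset.univ : Finset (Fin n)) ⊆ {p, q} := by
          intro x _
          by_cases hxp : x = p
          · simp [hxp]
          · simp [h x hxp]
        have hc := Finset.card_le_card hsubs
        have : ({p, q} : Finset (Fin n)).card ≤ 2 :=
          (Finset.card_insert_le _ _).trans (by simp)
        simp only [Finset.card_univ, Fintype.card_fin] at hc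
        omega
      have h1 := step3 p q r hpq (Ne.symm hrp) (Ne.symm hrq)
      have h2 := step3 p r q (Ne.symm hrp) hpq hrq
      have h3 := step3 q r p (Ne.symm hrq) (Ne.symm hpq) hrp
      omega
  intro i
  have : ∑ j : Fin n, c j = ∑ _j : Fin n, c i :=
    Finset.sum_congr rfl (fun j _ => step4 j i)
  rw [hsum, Finset.sum_const, Finset.card_univ, Fintype.card_fin] at this
  have h5 : (n : ℤ) * c i = 0 := by
    rw [← nsmul_eq_mul, ← this]
  rcases mul_eq_zero.mp h5 with h | h
  · exfalso
    have : (n : ℤ) ≠ 0 := by exact_mod_cast (by omega : n ≠ 0)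
    exact this h
  · exact h

theorem fix_adjoin (σ : ℂ ≃ₐ[ℚ] ℂ) (S : Set ℂ) (h : ∀ s ∈ S, σ s = s) :
    ∀ x ∈ IntermediateField.adjoin ℚ S, σ x = x := by
  let F : IntermediateField ℚ ℂ :=
    { AlgHom.equalizer (σ : ℂ →ₐ[ℚ] ℂ) (AlgHom.id ℚ ℂ) with
      inv_mem' := fun x hx => by
        have hx' : σ x = x := hx
        show σ x⁻¹ = x⁻¹
        rw [map_inv₀, hx'] }
  have hle : IntermediateField.adjoin ℚ S ≤ F :=
    IntermediateField.adjoin_le_iff.mpr (fun s hs => (h s hs : _))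
  intro x hx
  exact hle hx

end Helpers

/-- Let `β` be an algebraic integer of degree `n ≥ 5` with conjugates
`B 0, …, B (n-1)` and Galois group of the splitting field equal to `𝔄ₙ`.  Then
`α = ∑ aᵢ Bᵢ` generates `ℚ(B₀,…,Bₙ₋₁)` over `ℚ` iff the `aᵢ` take at least `n-1`
distinct values. -/
theorem stmt_3 (n : ℕ) (hn : 5 ≤ n) (b : ℂ) (B : Fin n → ℂ)
    (hbint : IsIntegral ℤ b)
    (hdeg : (minpoly ℚ b).natDegree = n)
    (hroots : (minpoly ℚ b).aroots ℂ = Multiset.map B Finset.univ.val)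
    (hgal : galoisImage n B = (alternatingGroup (Fin n) : Set (Equiv.Perm (Fin n))))
    (a : Fin n → ℤ) (α : ℂ) (hα : α = ∑ i, (a i : ℂ) * B i) :
    IntermediateField.adjoin ℚ {α} = IntermediateField.adjoin ℚ (Set.range B) ↔
      n - 1 ≤ (Finset.univ.image a).card := by
  classical
  set p := minpoly ℚ b with hp
  have hbQ : IsIntegral ℚ b := hbint.tower_top
  have hp0 : p ≠ 0 := minpoly.ne_zero hbQ
  have hnodup : (Multiset.map B Finset.univ.val).Nodup := by
    rw [← hroots, aroots_def]
    exact Polynomial.nodup_roots ((minpoly.irreducible hbQ).separable.map)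
  have hBinj : Function.Injective B := by
    intro x y hxy
    exact Multiset.inj_on_of_nodup_map hnodup x (by simp) y (by simp) hxy
  have hroot : ∀ i, (Polynomial.aeval (B i)) p = 0 := by
    intro i
    have hBmem : B i ∈ p.aroots ℂ := by
      rw [hroots]
      exact Multiset.mem_map_of_mem B (by simp)
    exact (Polynomial.mem_aroots.mp hBmem).2
  -- every automorphism of ℂ induces an even permutation of the roots
  have perm_of : ∀ σ : ℂ ≃ₐ[ℚ] ℂ, ∃ τ : Equiv.Perm (Fin n),
      τ ∈ alternatingGroup (Fin n) ∧ ∀ i, σ (B i) = B (τ i) := by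
    intro σ
    have hf : ∀ i, ∃ j, σ (B i) = B j := by
      intro i
      have hmem : σ (B i) ∈ p.aroots ℂ := by
        rw [Polynomial.mem_aroots]
        refine ⟨hp0, ?_⟩
        have h2 := Polynomial.aeval_algHom_apply σ.toAlgHom (B i) p
        rw [hroot i, map_zero] at h2
        exact h2
      rw [hroots] at hmem
      obtain ⟨j, -, hj⟩ := Multiset.mem_map.mp hmem
      exact ⟨j, hj.symm⟩
    choose f hfs using hf
    have hfinj : Function.Injective f := by
      intro x y hxy
      apply hBinj
      apply σ.injective
      rw [hfs x, hfs y, hxy]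
    let τ := Equiv.ofBijective f (Finite.injective_iff_bijective.mp hfinj)
    have hτmem : τ ∈ galoisImage n B := ⟨σ, fun i => hfs i⟩
    rw [hgal] at hτmem
    exact ⟨τ, hτmem, hfs⟩
  -- every even permutation is realized by an automorphism
  have hA : ∀ ρ : Equiv.Perm (Fin n), ρ ∈ alternatingGroup (Fin n) →
      ∃ σ : ℂ ≃ₐ[ℚ] ℂ, ∀ i, σ (B i) = B (ρ i) := by
    intro ρ hρ
    have hmem : ρ ∈ galoisImage n B := by rw [hgal]; exact hρ
    exact hmem
  set K : IntermediateField ℚ ℂ := IntermediateField.adjoin ℚ (Set.range B) with hK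
  have hBK : ∀ i, B i ∈ K := fun i => IntermediateField.subset_adjoin ℚ _ ⟨i, rfl⟩
  have hαK : α ∈ K := by
    rw [hα]
    exact sum_mem (fun i _ => mul_mem (intCast_mem K (a i)) (hBK i))
  constructor
  · -- forward direction
    intro hL
    by_contra hc
    have hQfail := mt (card_ge_of_unique_pair a) hc
    push_neg at hQfail
    obtain ⟨i, j, k, l, hij, hkl, hcij, hckl, hbad⟩ := hQfail
    set τ := Equiv.swap i j * Equiv.swap k l with hτdef
    have hτA : τ ∈ alternatingGroup (Fin n) := by
      rw [Equiv.Perm.mem_alternatingGroup, hτdef, map_mul, Equiv.Perm.sign_swap hij,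
        Equiv.Perm.sign_swap hkl]
      decide
    have hswappres : ∀ (u v x : Fin n), a u = a v → a (Equiv.swap u v x) = a x := by
      intro u v x huv
      rcases eq_or_ne x u with h1 | h1
      · rw [h1, Equiv.swap_apply_left, huv]
      · rcases eq_or_ne x v with h2 | h2
        · rw [h2, Equiv.swap_apply_right, huv]
        · rw [Equiv.swap_apply_of_ne_of_ne h1 h2]
    have hτfix : ∀ x, a (τ x) = a x := by
      intro x
      rw [hτdef, Equiv.Perm.mul_apply, hswappres i j _ hcij, hswappres k l x hckl]
    have hτk : τ k ≠ k := by
      rw [hτdef, Equiv.Perm.mul_apply, Equiv.swap_apply_left]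
      intro h
      rcases eq_or_ne l i with h1 | h1
      · rw [h1, Equiv.swap_apply_left] at h
        exact hbad.2 h.symm h1
      · rcases eq_or_ne l j with h2 | h2
        · rw [h2, Equiv.swap_apply_right] at h
          exact hbad.1 h.symm h2
        · rw [Equiv.swap_apply_of_ne_of_ne h1 h2] at h
          exact hkl h.symm
    obtain ⟨σ, hσ⟩ := hA τ hτA
    have hσα : σ α = α := by
      rw [hα, map_sum]
      simp only [map_mul, map_intCast, hσ]
      calc ∑ x, (a x : ℂ) * B (τ x) = ∑ x, (a (τ x) : ℂ) * B (τ x) :=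
            Finset.sum_congr rfl (fun x _ => by rw [hτfix x])
        _ = ∑ x, (a x : ℂ) * B x := Equiv.sum_comp τ (fun x => (a x : ℂ) * B x)
    have hBfix : σ (B k) = B k := by
      apply fix_adjoin σ {α} (by simpa using hσα)
      rw [hL]
      exact hBK k
    rw [hσ k] at hBfix
    exact hτk (hBinj hBfix)
  · -- backward direction
    intro hcard
    have hsplits : (p.map (algebraMap ℚ ℂ)).Splits := IsAlgClosed.splits _
    have hrootSet : p.rootSet ℂ = Set.range B := by
      rw [Polynomial.rootSet, hroots]
      ext x
      simp [List.mem_ofFn]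
    have hKsplit : Polynomial.IsSplittingField ℚ K p := by
      rw [hK, ← hrootSet]
      exact IntermediateField.adjoin_rootSet_isSplittingField hsplits
    haveI := hKsplit
    haveI : FiniteDimensional ℚ K := Polynomial.IsSplittingField.finiteDimensional K p
    haveI : Normal ℚ K := Normal.of_isSplittingField p
    haveI : IsGalois ℚ K := ⟨⟩
    -- any `ℚ`-automorphism of `K` fixing `α` is the identity
    have core : ∀ σK : K ≃ₐ[ℚ] K, σK ⟨α, hαK⟩ = ⟨α, hαK⟩ → σK = 1 := by
      intro σK hfixα
      obtain ⟨σ, hσext⟩ := extend_to_complex K σK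
      have hσα : σ α = α := by
        have h1 := hσext ⟨α, hαK⟩
        rw [hfixα] at h1
        simpa using h1
      obtain ⟨τ, hτA, hτ⟩ := perm_of σ
      have hrel0 : ∑ x, (a x : ℂ) * B (τ x) = ∑ x, (a x : ℂ) * B x := by
        have h1 : σ α = ∑ x, (a x : ℂ) * B (τ x) := by
          rw [hα, map_sum]
          simp only [map_mul, map_intCast, hτ]
        rw [← h1, hσα, hα]
      set c : Fin n → ℤ := fun x => a (τ⁻¹ x) - a x with hc
      have hsum : ∑ x, c x = 0 := by
        simp only [hc]
        rw [Finset.sum_sub_distrib, Equiv.sum_comp τ⁻¹ a, sub_self]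
      have hrelC : ∑ x, (c x : ℂ) * B x = 0 := by
        have hexp : ∀ x, (c x : ℂ) * B x
            = (a (τ⁻¹ x) : ℂ) * B x - (a x : ℂ) * B x := by
          intro x
          simp only [hc]
          push_cast
          ring
        rw [Finset.sum_congr rfl (fun x _ => hexp x), Finset.sum_sub_distrib]
        have hre : ∑ x, (a (τ⁻¹ x) : ℂ) * B x = ∑ x, (a x : ℂ) * B (τ x) := by
          rw [← Equiv.sum_comp τ (fun x => (a (τ⁻¹ x) : ℂ) * B x)]
          simp
        rw [hre, hrel0, sub_self]
      have hc0 := key_rel hn hBinj hA c hsum hrelC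
      have hfix : ∀ x, a (τ x) = a x := by
        intro x
        have h2 := hc0 (τ x)
        simp only [hc, ← Equiv.Perm.mul_apply, inv_mul_cancel, Equiv.Perm.one_apply] at h2
        omega
      have hτ1 : τ = 1 := rigid hn a hcard τ hτA hfix
      have hfixB : ∀ s ∈ Set.range B, σ s = s := by
        rintro s ⟨i, rfl⟩
        rw [hτ i, hτ1]
        rfl
      refine AlgEquiv.ext fun x => ?_
      have hx : σ (x : ℂ) = x := fix_adjoin σ (Set.range B) hfixB x x.2
      apply Subtype.ext
      have h3 := hσext x
      rw [hx] at h3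
      exact h3.symm
    set L' := IntermediateField.adjoin ℚ {(⟨α, hαK⟩ : K)} with hL'
    have hfixing : L'.fixingSubgroup = ⊥ := by
      rw [eq_bot_iff]
      intro σK hσK
      rw [Subgroup.mem_bot]
      apply core
      exact hσK ⟨⟨α, hαK⟩, IntermediateField.mem_adjoin_simple_self ℚ _⟩
    have hLtop : L' = ⊤ := by
      have h1 := IsGalois.fixedField_fixingSubgroup L'
      rw [hfixing] at h1
      rw [← h1]
      ext x
      refine ⟨fun _ => trivial, fun _ => ?_⟩
      rintro ⟨σK, hσK⟩
      rw [Subgroup.mem_bot] at hσK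
      show σK • x = x
      rw [hσK]
      rfl
    apply le_antisymm
    · exact IntermediateField.adjoin_le_iff.mpr (by simpa using hαK)
    · intro x hx
      have hmap : IntermediateField.map K.val L' = IntermediateField.adjoin ℚ {α} := by
        show IntermediateField.map K.val (IntermediateField.adjoin ℚ {(⟨α, hαK⟩ : K)}) = _
        rw [IntermediateField.adjoin_map]
        congr 1
        simp
      rw [← hmap]
      exact ⟨⟨x, hx⟩, hLtop ▸ IntermediateField.mem_top, rfl⟩
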